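/- arXiv:2211.15776 — 3 statements merged into one kernel-verified Lean document; each statement's English description precedes it below -/
import Mathlib

section
/- An orthogonal Latin square of order d gives rise to a tensor in 𝒫(4,d): if (A,B) is a pair of d×d matrices with entries in {1,…,d} forming an orthogonal Latin square, then the tensor Φ with Φ_{ijkl} = δ_{a_{kl},i} δ_{b_{kl},j} has all three flattenings F₁(Φ), F₂(Φ), F₃(Φ) equal to permutation matrices, hence unitary. -/
open Matrix

/-- Flattening grouping indices (1,2)|(3,4). -/
def F1 {d : ℕ} (Φ : Fin d → Fin d → Fin d → Fin d → ℂ) :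
    Matrix (Fin d × Fin d) (Fin d × Fin d) ℂ :=
  fun p q => Φ p.1 p.2 q.1 q.2

/-- Flattening grouping indices (1,3)|(2,4). -/
def F2 {d : ℕ} (Φ : Fin d → Fin d → Fin d → Fin d → ℂ) :
    Matrix (Fin d × Fin d) (Fin d × Fin d) ℂ :=
  fun p q => Φ p.1 q.1 p.2 q.2

/-- Flattening grouping indices (1,4)|(2,3). -/
def F3 {d : ℕ} (Φ : Fin d → Fin d → Fin d → Fin d → ℂ) :
    Matrix (Fin d × Fin d) (Fin d × Fin d) ℂ :=
  fun p q => Φ p.1 q.1 q.2 p.2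

/-- A matrix is a permutation matrix. -/
def IsPermMatrix {ι : Type*} [DecidableEq ι] (M : Matrix ι ι ℂ) : Prop :=
  ∃ σ : Equiv.Perm ι, ∀ p q, M p q = if σ q = p then 1 else 0

/-- A Latin square: each row and column is a bijection. -/
def IsLatinSquare {α : Type*} (A : α → α → α) : Prop :=
  (∀ i, Function.Bijective (A i)) ∧ (∀ j, Function.Bijective (fun i => A i j))

/-- An orthogonal Latin square: a pair of Latin squares whose entrywise
pairs are pairwise distinct. -/
def IsOLS {α : Type*} (A B : α → α → α) : Prop :=
  IsLatinSquare A ∧ IsLatinSquare B ∧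
    Function.Injective (fun p : α × α => (A p.1 p.2, B p.1 p.2))

lemma perm_mem_unitary {ι : Type*} [DecidableEq ι] [Fintype ι] {M : Matrix ι ι ℂ}
    (h : IsPermMatrix M) : M ∈ Matrix.unitaryGroup ι ℂ := by
  obtain ⟨σ, hσ⟩ := h
  rw [Matrix.mem_unitaryGroup_iff]
  ext p q
  simp only [Matrix.mul_apply, Matrix.star_apply, hσ, Matrix.one_apply]
  have hrw : ∀ r x : ι, (σ r = x) = (r = σ.symm x) := by
    intro r x
    simp [Equiv.apply_eq_iff_eq_symm_apply]
  simp only [hrw]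
  simp [apply_ite, Finset.sum_ite_eq', eq_comm]

theorem ols_gives_perfect_tensor {d : ℕ} (A B : Fin d → Fin d → Fin d)
    (hAB : IsOLS A B)
    (Φ : Fin d → Fin d → Fin d → Fin d → ℂ)
    (hΦ : ∀ i j k l, Φ i j k l = if A k l = i ∧ B k l = j then 1 else 0) :
    (IsPermMatrix (F1 Φ) ∧ IsPermMatrix (F2 Φ) ∧ IsPermMatrix (F3 Φ)) ∧
    (F1 Φ ∈ Matrix.unitaryGroup (Fin d × Fin d) ℂ ∧
     F2 Φ ∈ Matrix.unitaryGroup (Fin d × Fin d) ℂ ∧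
     F3 Φ ∈ Matrix.unitaryGroup (Fin d × Fin d) ℂ) := by
  obtain ⟨⟨hArow, hAcol⟩, ⟨hBrow, hBcol⟩, hinj⟩ := hAB
  -- σ1
  have h1 : IsPermMatrix (F1 Φ) := by
    refine ⟨Equiv.ofBijective (fun q : Fin d × Fin d => (A q.1 q.2, B q.1 q.2))
      (Finite.injective_iff_bijective.mp hinj), fun p q => ?_⟩
    simp only [F1, hΦ, Equiv.ofBijective_apply]
    congr 1
    simp [Prod.ext_iff, eq_comm]
  -- σ2 : (j,l) ↦ (A k l, k) where B k l = j
  have h2 : IsPermMatrix (F2 Φ) := by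
    set g : Fin d → Equiv.Perm (Fin d) :=
      fun l => Equiv.ofBijective (fun k => B k l) (hBcol l) with hg
    set f : Fin d × Fin d → Fin d × Fin d :=
      fun q => (A ((g q.2).symm q.1) q.2, (g q.2).symm q.1) with hf
    have hfB : ∀ q : Fin d × Fin d, B ((g q.2).symm q.1) q.2 = q.1 :=
      fun q => (g q.2).apply_symm_apply q.1
    have hfinj : Function.Injective f := by
      rintro ⟨j, l⟩ ⟨j', l'⟩ hq
      simp only [hf, Prod.mk.injEq] at hq
      obtain ⟨h1', h2'⟩ := hq
      have hl : l = l' := by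
        rw [h2'] at h1'
        exact (hArow ((g l').symm j')).injective h1'
      subst hl
      have : j = j' := by
        have hb := hfB (j, l); have hb' := hfB (j', l)
        simp only at hb hb'
        rw [h2'] at hb
        rw [hb'] at hb
        exact hb.symm
      simp [this]
    refine ⟨Equiv.ofBijective f (Finite.injective_iff_bijective.mp hfinj),
      fun p q => ?_⟩
    simp only [F2, hΦ, Equiv.ofBijective_apply]
    congr 1
    simp only [hf, Prod.ext_iff, eq_iff_iff]
    constructor
    · rintro ⟨hi, hk⟩
      have hs : (g q.2).symm q.1 = p.2 := by
        rw [Equiv.symm_apply_eq]; exact hk.symm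
      rw [hs]; exact ⟨hi, rfl⟩
    · rintro ⟨hi, hj⟩
      rw [← hj]; exact ⟨hi, hfB q⟩
  -- σ3 : (j,k) ↦ (A k l, l) where B k l = j
  have h3 : IsPermMatrix (F3 Φ) := by
    set g : Fin d → Equiv.Perm (Fin d) :=
      fun k => Equiv.ofBijective (fun l => B k l) (hBrow k) with hg
    set f : Fin d × Fin d → Fin d × Fin d :=
      fun q => (A q.2 ((g q.2).symm q.1), (g q.2).symm q.1) with hf
    have hfB : ∀ q : Fin d × Fin d, B q.2 ((g q.2).symm q.1) = q.1 :=
      fun q => (g q.2).apply_symm_apply q.1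
    have hfinj : Function.Injective f := by
      rintro ⟨j, k⟩ ⟨j', k'⟩ hq
      simp only [hf, Prod.mk.injEq] at hq
      obtain ⟨h1', h2'⟩ := hq
      have hk : k = k' := by
        rw [h2'] at h1'
        exact (hAcol ((g k').symm j')).injective h1'
      subst hk
      have : j = j' := by
        have hb := hfB (j, k); have hb' := hfB (j', k)
        simp only at hb hb'
        rw [h2'] at hb
        rw [hb'] at hb
        exact hb.symm
      simp [this]
    refine ⟨Equiv.ofBijective f (Finite.injective_iff_bijective.mp hfinj),
      fun p q => ?_⟩
    simp only [F3, hΦ, Equiv.ofBijective_apply]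
    congr 1
    simp only [hf, Prod.ext_iff, eq_iff_iff]
    constructor
    · rintro ⟨hi, hl⟩
      have hs : (g q.2).symm q.1 = p.2 := by
        rw [Equiv.symm_apply_eq]; exact hl.symm
      rw [hs]; exact ⟨hi, rfl⟩
    · rintro ⟨hi, hj⟩
      rw [← hj]; exact ⟨hi, hfB q⟩
  exact ⟨⟨h1, h2, h3⟩, perm_mem_unitary h1, perm_mem_unitary h2, perm_mem_unitary h3⟩
end

section
/- Conversely, if Φ ∈ (ℂ^d)^⊗4 is a tensor such that all three flattenings F₁(Φ), F₂(Φ), F₃(Φ) are permutation matrices, then there exists an orthogonal Latin square (A,B) of order d such that Φ_{ijkl} = δ_{a_{kl},i} δ_{b_{kl},j}. -/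
open Matrix

theorem perm_flattenings_give_ols {d : ℕ}
    (Φ : Fin d → Fin d → Fin d → Fin d → ℂ)
    (h1 : IsPermMatrix (F1 Φ)) (h2 : IsPermMatrix (F2 Φ))
    (h3 : IsPermMatrix (F3 Φ)) :
    ∃ A B : Fin d → Fin d → Fin d, IsOLS A B ∧
      ∀ i j k l, Φ i j k l = if A k l = i ∧ B k l = j then 1 else 0 := by
  obtain ⟨σ1, hσ1⟩ := h1
  obtain ⟨σ2, hσ2⟩ := h2
  obtain ⟨σ3, hσ3⟩ := h3
  have key12 : ∀ i j k l : Fin d, σ1 (k, l) = (i, j) ↔ σ2 (j, l) = (i, k) := by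
    intro i j k l
    have e1 := hσ1 (i, j) (k, l)
    have e2 := hσ2 (i, k) (j, l)
    simp only [F1, F2] at e1 e2
    rw [e1] at e2
    constructor <;> intro h
    · by_contra hc
      rw [if_pos h, if_neg hc] at e2; exact one_ne_zero e2
    · by_contra hc
      rw [if_neg hc, if_pos h] at e2; exact zero_ne_one e2
  have key13 : ∀ i j k l : Fin d, σ1 (k, l) = (i, j) ↔ σ3 (j, k) = (i, l) := by
    intro i j k l
    have e1 := hσ1 (i, j) (k, l)
    have e2 := hσ3 (i, l) (j, k)
    simp only [F1, F3] at e1 e2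
    rw [e1] at e2
    constructor <;> intro h
    · by_contra hc
      rw [if_pos h, if_neg hc] at e2; exact one_ne_zero e2
    · by_contra hc
      rw [if_neg hc, if_pos h] at e2; exact zero_ne_one e2
  refine ⟨fun k l => (σ1 (k, l)).1, fun k l => (σ1 (k, l)).2, ⟨⟨?_, ?_⟩, ⟨?_, ?_⟩, ?_⟩, ?_⟩
  · -- A row bijective: k fixed, l ↦ (σ1 (k,l)).1
    intro k
    rw [← Finite.injective_iff_bijective]
    intro l l' h
    simp only at h
    have h1 : σ2 ((σ1 (k, l)).2, l) = ((σ1 (k, l)).1, k) :=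
      (key12 _ _ _ _).mp rfl
    have h2 : σ2 ((σ1 (k, l')).2, l') = ((σ1 (k, l)).1, k) := by
      rw [h]; exact (key12 _ _ _ _).mp rfl
    have := σ2.injective (h1.trans h2.symm)
    exact (Prod.mk.injEq _ _ _ _ ▸ this).2
  · -- A column bijective: l fixed, k ↦ (σ1 (k,l)).1
    intro l
    rw [← Finite.injective_iff_bijective]
    intro k k' h
    simp only at h
    have h1 : σ3 ((σ1 (k, l)).2, k) = ((σ1 (k, l)).1, l) :=
      (key13 _ _ _ _).mp rfl
    have h2 : σ3 ((σ1 (k', l)).2, k') = ((σ1 (k, l)).1, l) := by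
      rw [h]; exact (key13 _ _ _ _).mp rfl
    have := σ3.injective (h1.trans h2.symm)
    exact (Prod.mk.injEq _ _ _ _ ▸ this).2
  · -- B row bijective
    intro k
    rw [← Finite.injective_iff_bijective]
    intro l l' h
    simp only at h
    have h1 : σ3 ((σ1 (k, l)).2, k) = ((σ1 (k, l)).1, l) :=
      (key13 _ _ _ _).mp rfl
    have h2 : σ3 ((σ1 (k, l)).2, k) = ((σ1 (k, l')).1, l') := by
      rw [h]; exact (key13 _ _ _ _).mp rfl
    have := h1.symm.trans h2
    exact (Prod.mk.injEq _ _ _ _ ▸ this).2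
  · -- B column bijective
    intro l
    rw [← Finite.injective_iff_bijective]
    intro k k' h
    simp only at h
    have h1 : σ2 ((σ1 (k, l)).2, l) = ((σ1 (k, l)).1, k) :=
      (key12 _ _ _ _).mp rfl
    have h2 : σ2 ((σ1 (k, l)).2, l) = ((σ1 (k', l)).1, k') := by
      rw [h]; exact (key12 _ _ _ _).mp rfl
    have := h1.symm.trans h2
    exact (Prod.mk.injEq _ _ _ _ ▸ this).2
  · -- orthogonality
    intro p q h
    simp only [Prod.mk.injEq] at h
    have : σ1 p = σ1 q := Prod.ext h.1 h.2
    exact σ1.injective this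
  · intro i j k l
    have e1 := hσ1 (i, j) (k, l)
    simp only [F1] at e1
    rw [e1]
    congr 1
    simp only [eq_iff_iff]
    constructor
    · intro h; rw [h]; exact ⟨rfl, rfl⟩
    · rintro ⟨ha, hb⟩; exact Prod.ext ha hb
end

section
/- If Φ ∈ (ℂ^d)^⊗n (with n even) is a tensor such that for every bipartition (I,J) of {1,…,n} with |I| = |J| = n/2 the flattening Φ_{I,J} is unitary, then for every bipartition (I,J) with |I| ≤ |J|, the map Φ_{I,J} is proportional to an isometry; i.e., Φ is a perfect tensor. -/
open Matrix

/-- The flattening of a tensor `Φ ∈ (ℂ^d)^⊗n` along the bipartition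
`(I, Iᶜ)`: a matrix from the `I`-indices to the `Iᶜ`-indices. -/
def flatten {n d : ℕ} (Φ : (Fin n → Fin d) → ℂ) (I : Finset (Fin n)) :
    Matrix ({i : Fin n // i ∉ I} → Fin d) ({i : Fin n // i ∈ I} → Fin d) ℂ :=
  fun r c => Φ (fun i => if h : i ∈ I then c ⟨i, h⟩ else r ⟨i, h⟩)

/-- Split the complement of `I` into `J \ I` and the complement of `J`. -/
def splitEquiv {n : ℕ} {I J : Finset (Fin n)} (hIJ : I ⊆ J) :
    {i : Fin n // i ∉ I} ≃ {i : Fin n // i ∈ J \ I} ⊕ {i : Fin n // i ∉ J} where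
  toFun x := if h : x.1 ∈ J then Sum.inl ⟨x.1, Finset.mem_sdiff.2 ⟨h, x.2⟩⟩ else Sum.inr ⟨x.1, h⟩
  invFun y := y.elim (fun z => ⟨z.1, (Finset.mem_sdiff.1 z.2).2⟩) (fun z => ⟨z.1, fun hz => z.2 (hIJ hz)⟩)
  left_inv x := by by_cases h : x.1 ∈ J <;> simp [h]
  right_inv y := by
    cases y with
    | inl z => simp [(Finset.mem_sdiff.1 z.2).1]
    | inr z => simp [z.2]

/-- Merge an index assignment on `I` with one on `J \ I` into one on `J`. -/
def merge {n d : ℕ} {I J : Finset (Fin n)} (_hIJ : I ⊆ J)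
    (c : {i : Fin n // i ∈ I} → Fin d) (a : {i : Fin n // i ∈ J \ I} → Fin d) :
    {i : Fin n // i ∈ J} → Fin d :=
  fun i => if h : i.1 ∈ I then c ⟨i.1, h⟩ else a ⟨i.1, Finset.mem_sdiff.2 ⟨i.2, h⟩⟩

/-- If every balanced flattening of a tensor (n even) is unitary, then every
flattening `Φ_{I,J}` with `|I| ≤ |J|` is proportional to an isometry, i.e. `Φ`
is a perfect tensor. -/
theorem perfect_of_balanced_unitary {n d : ℕ} (hn : Even n)
    (Φ : (Fin n → Fin d) → ℂ)
    (h : ∀ I : Finset (Fin n), I.card = n / 2 →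
      (flatten Φ I)ᴴ * flatten Φ I = 1 ∧ flatten Φ I * (flatten Φ I)ᴴ = 1) :
    ∀ I : Finset (Fin n), I.Nonempty → Iᶜ.Nonempty → I.card ≤ Iᶜ.card →
      ∃ c : ℝ, 0 ≤ c ∧ (flatten Φ I)ᴴ * flatten Φ I = (c : ℂ) • 1 := by
  intro I _ _ hcard
  have hcompl : Iᶜ.card = n - I.card := by simp [Finset.card_compl]
  have hIle : I.card ≤ n := by
    simpa using Finset.card_le_card (Finset.subset_univ I)
  have hIn : I.card ≤ n / 2 := by omega
  obtain ⟨J, hIJ, _, hJcard⟩ := Finset.exists_subsuperset_card_eq (Finset.subset_univ I) hIn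
    (by simp; omega)
  have hJ := (h J hJcard).1
  refine ⟨(Fintype.card ({i : Fin n // i ∈ J \ I} → Fin d) : ℝ), Nat.cast_nonneg _, ?_⟩
  ext c₁ c₂
  -- function-space equivalence
  let e : ({i : Fin n // i ∉ I} → Fin d) ≃
      (({i : Fin n // i ∈ J \ I} → Fin d) × ({i : Fin n // i ∉ J} → Fin d)) :=
    (Equiv.arrowCongr (splitEquiv hIJ) (Equiv.refl _)).trans
      (Equiv.sumArrowEquivProdArrow _ _ _)
  have key : ∀ (a : {i : Fin n // i ∈ J \ I} → Fin d) (b : {i : Fin n // i ∉ J} → Fin d)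
      (c : {i : Fin n // i ∈ I} → Fin d),
      (fun i => if h : i ∈ I then c ⟨i, h⟩ else (e.symm (a, b)) ⟨i, h⟩)
        = (fun i => if h : i ∈ J then merge hIJ c a ⟨i, h⟩ else b ⟨i, h⟩) := by
    intro a b c
    funext i
    by_cases hi : i ∈ I
    · simp [hi, hIJ hi, merge]
    · by_cases hj : i ∈ J
      · simp [hi, hj, merge, e, splitEquiv, Equiv.sumArrowEquivProdArrow]
      · simp [hi, hj, e, splitEquiv, Equiv.sumArrowEquivProdArrow]
  have hmerge_inj : ∀ (a : {i : Fin n // i ∈ J \ I} → Fin d)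
      (c c' : {i : Fin n // i ∈ I} → Fin d), merge hIJ c a = merge hIJ c' a ↔ c = c' := by
    intro a c c'
    constructor
    · intro hcc
      funext i
      have := congrFun hcc ⟨i.1, hIJ i.2⟩
      simpa [merge, i.2] using this
    · rintro rfl; rfl
  have hJentry : ∀ (x y : {i : Fin n // i ∈ J} → Fin d),
      ∑ b : {i : Fin n // i ∉ J} → Fin d,
        star (flatten Φ J b x) * flatten Φ J b y = if x = y then 1 else 0 := by
    intro x y
    have := congrFun (congrFun hJ x) y
    simpa [Matrix.mul_apply, Matrix.conjTranspose_apply, Matrix.one_apply] using this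
  simp only [Matrix.mul_apply, Matrix.conjTranspose_apply, Matrix.smul_apply,
    Matrix.one_apply, smul_eq_mul]
  rw [Fintype.sum_equiv e
    (fun r => star (flatten Φ I r c₁) * flatten Φ I r c₂)
    (fun p => star (flatten Φ I (e.symm p) c₁) * flatten Φ I (e.symm p) c₂)
    (fun r => by simp)]
  rw [Fintype.sum_prod_type]
  have inner : ∀ a, ∑ b : {i : Fin n // i ∉ J} → Fin d,
      star (flatten Φ I (e.symm (a, b)) c₁) * flatten Φ I (e.symm (a, b)) c₂
      = if c₁ = c₂ then 1 else 0 := by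
    intro a
    have : ∀ b c, flatten Φ I (e.symm (a, b)) c = flatten Φ J b (merge hIJ c a) := by
      intro b c
      simp only [flatten]
      rw [key]
    simp only [this]
    rw [hJentry]; simp only [hmerge_inj]
  simp only [inner, Finset.sum_const, Finset.card_univ, nsmul_eq_mul]
  split <;> simp
end
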